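/- Let U ⊂ ℝ^n be compact containing 0 in its convex hull, let V be the closed unit ℓ₂-ball of ℝ^d, let Θ be the gauge of {u vᵀ : u ∈ U, v ∈ V} on ℝ^{n×d}, and let γ_{P_U} be the gauge of the closed convex hull of {u uᵀ : u ∈ U} ∪ {0} in the symmetric matrices. Then for every X ∈ ℝ^{n×d}, Θ(X) = min over all factorizations X = U' V'ᵀ (U' ∈ ℝ^{n×r}, V' ∈ ℝ^{d×r}, r arbitrary) of (1/2) tr(V' V'ᵀ) + (1/2) γ_{P_U}(U' U'ᵀ). -/

import Mathlib

open Matrix Set ENNReal NNReal Pointwise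

noncomputable section

/-- The closed convex hull of `C ∪ {0}`. -/
def cvx {E : Type*} [AddCommGroup E] [Module ℝ E] [TopologicalSpace E] (C : Set E) : Set E :=
  closure (convexHull ℝ (insert 0 C))

/-- The (possibly infinite) gauge of the closed convex hull of `C ∪ {0}`. -/
def gaugeE {E : Type*} [AddCommGroup E] [Module ℝ E] [TopologicalSpace E] (C : Set E) (x : E) :
    ℝ≥0∞ :=
  ⨅ (r : ℝ≥0) (_ : x ∈ (r : ℝ) • cvx C), (r : ℝ≥0∞)

/-- `P_U = {u uᵀ : u ∈ U}`. -/
def PU {n : ℕ} (U : Set (Fin n → ℝ)) : Set (Matrix (Fin n) (Fin n) ℝ) :=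
  (fun u => vecMulVec u u) '' U

/-- `Θ(X)`: the gauge of `{u vᵀ : u ∈ U, v ∈ V}`. -/
def Theta {n d : ℕ} (U : Set (Fin n → ℝ)) (V : Set (Fin d → ℝ))
    (X : Matrix (Fin n) (Fin d) ℝ) : ℝ≥0∞ :=
  sInf {t : ℝ≥0∞ | ∃ (r : ℕ) (lam : Fin r → ℝ) (u : Fin r → Fin n → ℝ)
    (v : Fin r → Fin d → ℝ),
    (∀ m, 0 ≤ lam m) ∧ (∀ m, u m ∈ U) ∧ (∀ m, v m ∈ V) ∧
    X = ∑ m, lam m • vecMulVec (u m) (v m) ∧ t = ENNReal.ofReal (∑ m, lam m)}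

/-! ### Auxiliary lemmas -/

section Aux

lemma euc_norm_eq {n : ℕ} (x : EuclideanSpace ℝ (Fin n)) :
    ‖x‖ = Real.sqrt ((x : Fin n → ℝ) ⬝ᵥ x) := by
  rw [norm_eq_sqrt_real_inner]; congr 1

lemma euc_inner_eq {n : ℕ} (x y : EuclideanSpace ℝ (Fin n)) :
    (inner ℝ x y : ℝ) = (x : Fin n → ℝ) ⬝ᵥ y := by
  simp [PiLp.inner_apply, dotProduct, RCLike.inner_apply, mul_comm]

lemma exists_contraction {E F G : Type*} [NormedAddCommGroup E] [InnerProductSpace ℝ E]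
    [NormedAddCommGroup F] [InnerProductSpace ℝ F] [NormedAddCommGroup G] [InnerProductSpace ℝ G]
    [FiniteDimensional ℝ F]
    (S : E →ₗ[ℝ] F) (T : E →ₗ[ℝ] G) (h : ∀ x, ‖T x‖ ≤ ‖S x‖) :
    ∃ R : F →ₗ[ℝ] G, R ∘ₗ S = T ∧ ∀ y, ‖R y‖ ≤ ‖y‖ := by
  have hker : LinearMap.ker S ≤ LinearMap.ker T := by
    intro x hx
    rw [LinearMap.mem_ker] at hx ⊢
    have := h x
    rw [hx, norm_zero] at this
    exact norm_le_zero_iff.mp this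
  set φ : ↥(LinearMap.range S) →ₗ[ℝ] G :=
    ((LinearMap.ker S).liftQ T hker) ∘ₗ (S.quotKerEquivRange.symm :
      ↥(LinearMap.range S) →ₗ[ℝ] E ⧸ LinearMap.ker S) with hφ
  have hφS : ∀ x : E, φ ⟨S x, LinearMap.mem_range_self S x⟩ = T x := by
    intro x
    have h1 : S.quotKerEquivRange (Submodule.Quotient.mk x) =
        ⟨S x, LinearMap.mem_range_self S x⟩ := by
      ext
      exact S.quotKerEquivRange_apply_mk x
    have h2 : S.quotKerEquivRange.symm ⟨S x, LinearMap.mem_range_self S x⟩ =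
        Submodule.Quotient.mk x := by
      rw [← h1, LinearEquiv.symm_apply_apply]
    simp [hφ, h2, Submodule.liftQ_apply]
  have hφnorm : ∀ w : ↥(LinearMap.range S), ‖φ w‖ ≤ ‖(w : F)‖ := by
    rintro ⟨w, x, rfl⟩
    rw [hφS x]
    exact h x
  refine ⟨φ ∘ₗ (Submodule.orthogonalProjection (LinearMap.range S) : F →ₗ[ℝ] ↥(LinearMap.range S)), ?_, ?_⟩
  · ext x
    have : Submodule.orthogonalProjection (LinearMap.range S) (S x) =
        ⟨S x, LinearMap.mem_range_self S x⟩ :=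
      Submodule.orthogonalProjection_mem_subspace_eq_self ⟨S x, LinearMap.mem_range_self S x⟩
    simp only [LinearMap.comp_apply, ContinuousLinearMap.coe_coe, this, hφS x]
  · intro y
    refine le_trans (hφnorm _) ?_
    calc ‖(Submodule.orthogonalProjection (LinearMap.range S) y : F)‖
        = ‖Submodule.orthogonalProjection (LinearMap.range S) y‖ := rfl
      _ ≤ ‖y‖ := by
          have := (Submodule.orthogonalProjection (LinearMap.range S)).le_opNorm y
          calc ‖Submodule.orthogonalProjection (LinearMap.range S) y‖ ≤
              ‖Submodule.orthogonalProjection (LinearMap.range S)‖ * ‖y‖ := this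
          _ ≤ 1 * ‖y‖ := by
              apply mul_le_mul_of_nonneg_right (Submodule.orthogonalProjection_norm_le _) (norm_nonneg y)
          _ = ‖y‖ := one_mul _

lemma gram_factor {n k p : ℕ} (A : Matrix (Fin n) (Fin k) ℝ) (B : Matrix (Fin n) (Fin p) ℝ)
    (h : A * Aᵀ = B * Bᵀ) :
    ∃ Q : Matrix (Fin k) (Fin p) ℝ, A * Q = B ∧
      ∀ y : Fin p → ℝ, (Q *ᵥ y) ⬝ᵥ (Q *ᵥ y) ≤ y ⬝ᵥ y := by
  have key : ∀ (m : ℕ) (C : Matrix (Fin n) (Fin m) ℝ) (x : Fin n → ℝ),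
      (Cᵀ *ᵥ x) ⬝ᵥ (Cᵀ *ᵥ x) = x ⬝ᵥ ((C * Cᵀ) *ᵥ x) := by
    intro m C x
    rw [← Matrix.mulVec_mulVec, Matrix.dotProduct_mulVec x C (Cᵀ *ᵥ x), ← Matrix.mulVec_transpose]
  set S : EuclideanSpace ℝ (Fin n) →ₗ[ℝ] EuclideanSpace ℝ (Fin k) := Matrix.toEuclideanLin Aᵀ with hS
  set T : EuclideanSpace ℝ (Fin n) →ₗ[ℝ] EuclideanSpace ℝ (Fin p) := Matrix.toEuclideanLin Bᵀ with hT
  have hSx : ∀ x : EuclideanSpace ℝ (Fin n), (S x : Fin k → ℝ) = Aᵀ *ᵥ (x : Fin n → ℝ) := fun _ => rfl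
  have hTx : ∀ x : EuclideanSpace ℝ (Fin n), (T x : Fin p → ℝ) = Bᵀ *ᵥ (x : Fin n → ℝ) := fun _ => rfl
  have hnorm : ∀ x, ‖T x‖ ≤ ‖S x‖ := by
    intro x
    rw [euc_norm_eq, euc_norm_eq, hSx, hTx, key k A, key p B, h]
  obtain ⟨R, hRS, hRc⟩ := exists_contraction S T hnorm
  set M : Matrix (Fin p) (Fin k) ℝ := Matrix.toEuclideanLin.symm R with hM
  have hRM : ∀ z : EuclideanSpace ℝ (Fin k), (R z : Fin p → ℝ) = M *ᵥ (z : Fin k → ℝ) := by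
    intro z
    have : Matrix.toEuclideanLin M = R := Matrix.toEuclideanLin.apply_symm_apply R
    rw [← this]
    rfl
  have hMA : M * Aᵀ = Bᵀ := by
    apply Matrix.toEuclideanLin.injective
    ext x j
    have h2 : (M * Aᵀ) *ᵥ (x : Fin n → ℝ) = M *ᵥ (Aᵀ *ᵥ (x : Fin n → ℝ)) :=
      (Matrix.mulVec_mulVec _ _ _).symm
    have h3 : M *ᵥ (Aᵀ *ᵥ (x : Fin n → ℝ)) = (R (S x) : Fin p → ℝ) := by
      rw [hRM, hSx]
    have h4 : (R (S x) : Fin p → ℝ) = (T x : Fin p → ℝ) := by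
      rw [← LinearMap.comp_apply, hRS]
    calc (Matrix.toEuclideanLin (M * Aᵀ) x) j = ((M * Aᵀ) *ᵥ (x : Fin n → ℝ)) j := rfl
      _ = (T x) j := by rw [h2, h3, h4]
      _ = (Matrix.toEuclideanLin Bᵀ x) j := rfl
  refine ⟨Mᵀ, ?_, ?_⟩
  · have := congrArg Matrix.transpose hMA
    rwa [Matrix.transpose_mul, Matrix.transpose_transpose, Matrix.transpose_transpose] at this
  · intro y
    set w : Fin k → ℝ := Mᵀ *ᵥ y with hw
    have h1 : w ⬝ᵥ w = y ⬝ᵥ (M *ᵥ w) := by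
      calc w ⬝ᵥ w = (y ᵥ* M) ⬝ᵥ w := by rw [hw, Matrix.mulVec_transpose]
        _ = y ⬝ᵥ (M *ᵥ w) := (Matrix.dotProduct_mulVec _ _ _).symm
    set y' : EuclideanSpace ℝ (Fin p) := (WithLp.equiv 2 _).symm y with hy'
    set w' : EuclideanSpace ℝ (Fin k) := (WithLp.equiv 2 _).symm w with hw'
    have h2 : y ⬝ᵥ (M *ᵥ w) ≤ Real.sqrt (y ⬝ᵥ y) * Real.sqrt (w ⬝ᵥ w) := by
      have hcs := real_inner_le_norm y' (R w')
      have he : (inner ℝ y' (R w') : ℝ) = y ⬝ᵥ (M *ᵥ w) := by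
        rw [euc_inner_eq, hRM]
        rfl
      have hn1 : ‖y'‖ = Real.sqrt (y ⬝ᵥ y) := euc_norm_eq y'
      have hn2 : ‖R w'‖ ≤ Real.sqrt (w ⬝ᵥ w) := by
        calc ‖R w'‖ ≤ ‖w'‖ := hRc w'
          _ = Real.sqrt (w ⬝ᵥ w) := euc_norm_eq w'
      calc y ⬝ᵥ (M *ᵥ w) = (inner ℝ y' (R w') : ℝ) := he.symm
        _ ≤ ‖y'‖ * ‖R w'‖ := hcs
        _ ≤ Real.sqrt (y ⬝ᵥ y) * Real.sqrt (w ⬝ᵥ w) := by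
            rw [hn1]
            exact mul_le_mul_of_nonneg_left hn2 (Real.sqrt_nonneg _)
    have hyy : 0 ≤ y ⬝ᵥ y := Finset.sum_nonneg fun i _ => mul_self_nonneg _
    have hww : 0 ≤ w ⬝ᵥ w := Finset.sum_nonneg fun i _ => mul_self_nonneg _
    have hs1 : Real.sqrt (w ⬝ᵥ w) ^ 2 = w ⬝ᵥ w := Real.sq_sqrt hww
    have hs2 : Real.sqrt (y ⬝ᵥ y) ^ 2 = y ⬝ᵥ y := Real.sq_sqrt hyy
    have hkey : w ⬝ᵥ w ≤ Real.sqrt (y ⬝ᵥ y) * Real.sqrt (w ⬝ᵥ w) := h1.le.trans (h1 ▸ h2)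
    rcases eq_or_lt_of_le (Real.sqrt_nonneg (w ⬝ᵥ w)) with h0 | h0
    · have : w ⬝ᵥ w = 0 := by rw [← hs1, ← h0]; ring
      rw [this]; exact hyy
    · have hle : Real.sqrt (w ⬝ᵥ w) ≤ Real.sqrt (y ⬝ᵥ y) := by
        apply le_of_mul_le_mul_right _ h0
        calc Real.sqrt (w ⬝ᵥ w) * Real.sqrt (w ⬝ᵥ w) = w ⬝ᵥ w := Real.mul_self_sqrt hww
          _ ≤ Real.sqrt (y ⬝ᵥ y) * Real.sqrt (w ⬝ᵥ w) := hkey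
      calc w ⬝ᵥ w = Real.sqrt (w ⬝ᵥ w) ^ 2 := hs1.symm
        _ ≤ Real.sqrt (y ⬝ᵥ y) ^ 2 := by
            apply pow_le_pow_left₀ (Real.sqrt_nonneg _) hle
        _ = y ⬝ᵥ y := hs2

lemma isCompact_convexHull' {E : Type*} [AddCommGroup E] [Module ℝ E] [TopologicalSpace E]
    [IsTopologicalAddGroup E] [ContinuousSMul ℝ E] [FiniteDimensional ℝ E]
    {s : Set E} (hs : IsCompact s) : IsCompact (convexHull ℝ s) := by
  rcases s.eq_empty_or_nonempty with rfl | ⟨x₀, hx₀⟩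
  · simpa using isCompact_empty
  set N := Module.finrank ℝ E + 1 with hN
  have himg : convexHull ℝ s =
      (fun p : (Fin N → ℝ) × (Fin N → E) => ∑ i, p.1 i • p.2 i) ''
        (stdSimplex ℝ (Fin N) ×ˢ Set.pi Set.univ (fun _ : Fin N => s)) := by
    apply Subset.antisymm
    · intro x hx
      obtain ⟨ι, hft, z, w, hzs, hai, hwpos, hw1, hwz⟩ :=
        eq_pos_convex_span_of_mem_convexHull hx
      have hk : Fintype.card ι ≤ N := by
        calc Fintype.card ι ≤ Module.finrank ℝ (vectorSpan ℝ (range z)) + 1 :=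
              hai.card_le_finrank_succ
        _ ≤ N := by
          have := Submodule.finrank_le (vectorSpan ℝ (range z))
          omega
      set k := Fintype.card ι with hkdef
      obtain ⟨e⟩ : Nonempty (ι ≃ Fin k) := ⟨Fintype.equivFin ι⟩
      classical
      set w' : Fin N → ℝ := fun i => if h : (i : ℕ) < k then w (e.symm ⟨i, h⟩) else 0 with hw'
      set z' : Fin N → E := fun i => if h : (i : ℕ) < k then z (e.symm ⟨i, h⟩) else x₀ with hz'
      have hsum : ∀ (f : ℝ → E → ℝ × E) (_ : ∀ y, f 0 y = 0),
          ∑ i, f (w' i) (z' i) = ∑ j : ι, f (w j) (z j) := by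
        intro f h0
        rw [← Equiv.sum_comp e.symm (fun j => f (w j) (z j))]
        rw [← Finset.sum_subset (Finset.subset_univ
          ((Finset.univ : Finset (Fin k)).map ⟨fun j => Fin.castLE hk j, fun a b hab => by
            simpa [Fin.ext_iff] using hab⟩))]
        · rw [Finset.sum_map]
          apply Finset.sum_congr rfl
          intro j _
          have hj : ((Fin.castLE hk j : Fin N) : ℕ) < k := j.2
          simp only [hw', hz', Function.Embedding.coeFn_mk, dif_pos hj]
          erw [dif_pos hj, dif_pos hj]
          rfl
        · intro i _ hi
          have : ¬ ((i : ℕ) < k) := by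
            intro h
            apply hi
            simp only [Finset.mem_map, Finset.mem_univ, Function.Embedding.coeFn_mk]
            exact ⟨⟨i, h⟩, trivial, by ext; rfl⟩
          simp [hw', this, h0]
      refine ⟨(w', z'), ⟨⟨fun i => ?_, ?_⟩, fun i _ => ?_⟩, ?_⟩
      · by_cases h : (i : ℕ) < k
        · simp only [hw', dif_pos h]; exact (hwpos _).le
        · simp [hw', h]
      · have := congrArg Prod.fst (hsum (fun a y => (a, a • y)) (fun y => by simp))
        simpa [Prod.fst_sum, hw1] using this
      · by_cases h : (i : ℕ) < k
        · simp only [hz', dif_pos h]; exact hzs ⟨_, rfl⟩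
        · simp only [hz', dif_neg h]; exact hx₀
      · have := congrArg Prod.snd (hsum (fun a y => (a, a • y)) (fun y => by simp))
        simpa [Prod.snd_sum, hwz] using this
    · rintro x ⟨⟨w, z⟩, ⟨⟨hw0, hw1⟩, hzmem⟩, rfl⟩
      exact mem_convexHull_of_exists_fintype w z hw0 hw1 (fun i => hzmem i trivial) rfl
  rw [himg]
  exact (((isCompact_stdSimplex ℝ (Fin N)).prod (isCompact_univ_pi fun _ => hs)).image
    (continuous_finset_sum _ fun i _ =>
      ((continuous_apply i).comp continuous_fst).smul ((continuous_apply i).comp continuous_snd)))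

lemma sInf_mem_scaleSet {E : Type*} [AddCommGroup E] [Module ℝ E] [TopologicalSpace E]
    [IsTopologicalAddGroup E] [ContinuousSMul ℝ E] [T2Space E]
    {K : Set E} (hK : IsCompact K) (x : E)
    (hne : {r : ℝ≥0 | x ∈ (r : ℝ) • K}.Nonempty) :
    sInf {r : ℝ≥0 | x ∈ (r : ℝ) • K} ∈ {r : ℝ≥0 | x ∈ (r : ℝ) • K} := by
  set T := {r : ℝ≥0 | x ∈ (r : ℝ) • K} with hT
  set ρ := sInf T with hρ
  set R := ρ + 1 with hR
  obtain ⟨r₀, hr₀T, hr₀R⟩ : ∃ r ∈ T, r < R := by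
    apply exists_lt_of_csInf_lt hne
    rw [← hρ, hR]
    exact lt_add_of_pos_right ρ one_pos
  set T' := T ∩ Icc 0 R with hT'
  have hT'ne : T'.Nonempty := ⟨r₀, hr₀T, zero_le (a := r₀), hr₀R.le⟩
  set C := ((Icc (0:ℝ≥0) R) ×ˢ K) ∩ {p : ℝ≥0 × E | (p.1 : ℝ) • p.2 = x} with hC
  have hCcomp : IsCompact C :=
    ((isCompact_Icc).prod hK).inter_right
      (isClosed_eq ((NNReal.continuous_coe.comp continuous_fst).smul continuous_snd)
        continuous_const)
  have hT'img : T' = Prod.fst '' C := by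
    ext r
    constructor
    · rintro ⟨hrT, hrI⟩
      obtain ⟨y, hyK, hyx⟩ := hrT
      exact ⟨(r, y), ⟨⟨hrI, hyK⟩, hyx⟩, rfl⟩
    · rintro ⟨⟨r', y⟩, ⟨⟨hrI, hyK⟩, hyx⟩, rfl⟩
      exact ⟨⟨y, hyK, hyx⟩, hrI⟩
  have hT'comp : IsCompact T' := hT'img ▸ hCcomp.image continuous_fst
  have hmem : sInf T' ∈ T' := hT'comp.sInf_mem hT'ne
  have : sInf T' = ρ := by
    apply le_antisymm
    · apply le_csInf hne
      intro t ht
      rcases le_or_gt t R with h | h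
      · exact csInf_le (OrderBot.bddBelow T') ⟨ht, zero_le (a := t), h⟩
      · exact le_trans (le_trans (csInf_le (OrderBot.bddBelow T') hT'ne.choose_spec)
          (hT'ne.choose_spec.2.2)) h.le
    · exact le_csInf hT'ne fun t ht => csInf_le (OrderBot.bddBelow T) ht.1
  rw [show ρ = sInf T' from this.symm]
  exact hmem.1

lemma mem_convexHull_fin {E : Type*} [AddCommGroup E] [Module ℝ E] {s : Set E} {x : E}
    (hx : x ∈ convexHull ℝ s) :
    ∃ (k : ℕ) (w : Fin k → ℝ) (z : Fin k → E), (∀ i, 0 ≤ w i) ∧ ∑ i, w i = 1 ∧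
      (∀ i, z i ∈ s) ∧ ∑ i, w i • z i = x := by
  obtain ⟨ι, hft, w, z, hw0, hw1, hz, hxx⟩ := mem_convexHull_iff_exists_fintype.mp hx
  refine ⟨Fintype.card ι, w ∘ (Fintype.equivFin ι).symm, z ∘ (Fintype.equivFin ι).symm,
    fun i => hw0 _, ?_, fun i => hz _, ?_⟩
  · rw [← hw1]
    exact Equiv.sum_comp (Fintype.equivFin ι).symm w
  · rw [← hxx]
    exact Equiv.sum_comp (Fintype.equivFin ι).symm (fun j => w j • z j)

lemma smul_hull_rep {E ι : Type*} [AddCommGroup E] [Module ℝ E] {s : Set ι}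
    (f : ι → E) (z₀ : ι) (hz₀ : z₀ ∈ s) {x : E} {c : ℝ} (hc : 0 ≤ c)
    (hx : x ∈ c • convexHull ℝ (insert 0 (f '' s))) :
    ∃ (k : ℕ) (lam : Fin k → ℝ) (z : Fin k → ι), (∀ m, 0 ≤ lam m) ∧ (∀ m, z m ∈ s) ∧
      (∑ m, lam m) ≤ c ∧ x = ∑ m, lam m • f (z m) := by
  classical
  obtain ⟨y, hy, rfl⟩ := Set.mem_smul_set.mp hx
  obtain ⟨k, w, zE, hw0, hw1, hzE, hsum⟩ := mem_convexHull_fin hy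
  refine ⟨k, fun m => if (∃ i ∈ s, f i = zE m) then c * w m else 0,
    fun m => if h : (∃ i ∈ s, f i = zE m) then h.choose else z₀, fun m => ?_, fun m => ?_, ?_, ?_⟩
  · dsimp only
    by_cases h : ∃ i ∈ s, f i = zE m
    · rw [if_pos h]; exact mul_nonneg hc (hw0 m)
    · rw [if_neg h]
  · dsimp only
    by_cases h : ∃ i ∈ s, f i = zE m
    · rw [dif_pos h]; exact h.choose_spec.1
    · rw [dif_neg h]; exact hz₀
  · have hle : ∀ m ∈ Finset.univ, (if (∃ i ∈ s, f i = zE m) then c * w m else 0) ≤ c * w m := by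
      intro m _
      by_cases h : ∃ i ∈ s, f i = zE m
      · rw [if_pos h]
      · rw [if_neg h]; exact mul_nonneg hc (hw0 m)
    refine le_trans (Finset.sum_le_sum hle) ?_
    rw [← Finset.mul_sum, hw1, mul_one]
  · rw [← hsum, Finset.smul_sum]
    apply Finset.sum_congr rfl
    intro m _
    dsimp only
    by_cases h : ∃ i ∈ s, f i = zE m
    · rw [dif_pos h, if_pos h, h.choose_spec.2, smul_smul]
    · have hz0 : zE m = 0 := by
        rcases hzE m with h0 | hmem
        · exact h0
        · exact absurd (by obtain ⟨i, hi, hfi⟩ := hmem; exact ⟨i, hi, hfi⟩) h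
      rw [if_neg h, hz0]; simp

lemma smul_hull_rep_exact {E ι : Type*} [AddCommGroup E] [Module ℝ E] {s : Set ι}
    (f : ι → E) (z₀ : ι) (hz₀ : z₀ ∈ s) (hf0 : f z₀ = 0) {x : E} {c : ℝ} (hc : 0 ≤ c)
    (hx : x ∈ c • convexHull ℝ (insert 0 (f '' s))) :
    ∃ (k : ℕ) (lam : Fin k → ℝ) (z : Fin k → ι), (∀ m, 0 ≤ lam m) ∧ (∀ m, z m ∈ s) ∧
      (∑ m, lam m) = c ∧ x = ∑ m, lam m • f (z m) := by
  obtain ⟨k, lam, z, h0, hmem, hle, hxeq⟩ := smul_hull_rep f z₀ hz₀ hc hx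
  refine ⟨k + 1, Fin.snoc lam (c - ∑ m, lam m), Fin.snoc z z₀, ?_, ?_, ?_, ?_⟩
  · intro m
    induction m using Fin.lastCases with
    | last => simp [sub_nonneg.mpr hle]
    | cast i => simp [h0 i]
  · intro m
    induction m using Fin.lastCases with
    | last => simpa using hz₀
    | cast i => simpa using hmem i
  · rw [Fin.sum_univ_castSucc]
    simp
  · rw [hxeq, Fin.sum_univ_castSucc]
    simp [hf0]

lemma sum_smul_mem_smul_hull {E ι : Type*} [AddCommGroup E] [Module ℝ E] {s : Set ι} (f : ι → E)
    {k : ℕ} (lam : Fin k → ℝ) (hlam : ∀ m, 0 ≤ lam m) (z : Fin k → ι) (hz : ∀ m, z m ∈ s) :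
    (∑ m, lam m • f (z m)) ∈ (∑ m, lam m) • convexHull ℝ (insert 0 (f '' s)) := by
  set c := ∑ m, lam m with hcdef
  have hc : 0 ≤ c := Finset.sum_nonneg fun m _ => hlam m
  rcases eq_or_lt_of_le hc with h0 | h0
  · have hall : ∀ m ∈ Finset.univ, lam m = 0 :=
      (Finset.sum_eq_zero_iff_of_nonneg (fun m _ => hlam m)).mp h0.symm
    have : (∑ m, lam m • f (z m)) = 0 := by
      apply Finset.sum_eq_zero
      intro m hm
      rw [hall m hm, zero_smul]
    rw [this, ← h0]
    rw [zero_smul_set ⟨0, subset_convexHull ℝ _ (mem_insert 0 _)⟩]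
    exact rfl
  · refine Set.mem_smul_set.mpr ⟨∑ m, (lam m / c) • f (z m), ?_, ?_⟩
    · apply mem_convexHull_of_exists_fintype (fun m => lam m / c) (fun m => f (z m))
      · exact fun m => div_nonneg (hlam m) hc
      · rw [← Finset.sum_div, ← hcdef, div_self h0.ne']
      · exact fun m => mem_insert_iff.mpr (Or.inr ⟨z m, hz m, rfl⟩)
      · rfl
    · rw [Finset.smul_sum]
      apply Finset.sum_congr rfl
      intro m _
      rw [smul_smul, mul_div_cancel₀ _ h0.ne']

lemma factor_mul_transpose {a b r : ℕ} (lam : Fin r → ℝ) (hlam : ∀ m, 0 ≤ lam m)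
    (u : Fin r → Fin a → ℝ) (v : Fin r → Fin b → ℝ) :
    (Matrix.of fun i m => Real.sqrt (lam m) * u m i) *
      (Matrix.of fun j (m : Fin r) => Real.sqrt (lam m) * v m j)ᵀ
      = ∑ m, lam m • vecMulVec (u m) (v m) := by
  ext i j
  rw [Matrix.mul_apply, Matrix.sum_apply]
  apply Finset.sum_congr rfl
  intro m _
  rw [Matrix.transpose_apply]
  simp only [Matrix.of_apply, Matrix.smul_apply, Matrix.vecMulVec_apply, smul_eq_mul]
  have h : Real.sqrt (lam m) * Real.sqrt (lam m) = lam m := Real.mul_self_sqrt (hlam m)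
  calc Real.sqrt (lam m) * u m i * (Real.sqrt (lam m) * v m j)
      = (Real.sqrt (lam m) * Real.sqrt (lam m)) * (u m i * v m j) := by ring
    _ = lam m * (u m i * v m j) := by rw [h]

lemma trace_mul_transpose_self {b r : ℕ} (V' : Matrix (Fin b) (Fin r) ℝ) :
    (V' * V'ᵀ).trace = ∑ j, ∑ l, V' j l * V' j l := by
  rw [Matrix.trace]
  apply Finset.sum_congr rfl
  intro j _
  rw [Matrix.diag_apply, Matrix.mul_apply]
  apply Finset.sum_congr rfl
  intro l _
  rw [Matrix.transpose_apply]

end Aux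

/-- For `U` compact containing `0` in its convex hull and `V` the unit `ℓ₂`-ball,
`Θ(X)` is the minimum, over all factorizations `X = U' V'ᵀ`, of
`(1/2) tr(V' V'ᵀ) + (1/2) γ_{P_U}(U' U'ᵀ)`. -/
theorem statement10 {n d : ℕ} (U : Set (Fin n → ℝ)) (hU : IsCompact U)
    (hU0 : (0 : Fin n → ℝ) ∈ convexHull ℝ U)
    (X : Matrix (Fin n) (Fin d) ℝ) :
    Theta U {v : Fin d → ℝ | v ⬝ᵥ v ≤ 1} X =
      sInf {t : ℝ≥0∞ | ∃ (r : ℕ) (U' : Matrix (Fin n) (Fin r) ℝ)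
        (V' : Matrix (Fin d) (Fin r) ℝ), X = U' * V'ᵀ ∧
        t = ENNReal.ofReal ((V' * V'ᵀ).trace) / 2 + gaugeE (PU U) (U' * U'ᵀ) / 2} ∧
    (∃ (r : ℕ) (U' : Matrix (Fin n) (Fin r) ℝ) (V' : Matrix (Fin d) (Fin r) ℝ),
      X = U' * V'ᵀ ∧
      Theta U {v : Fin d → ℝ | v ⬝ᵥ v ≤ 1} X =
        ENNReal.ofReal ((V' * V'ᵀ).trace) / 2 + gaugeE (PU U) (U' * U'ᵀ) / 2) := by
  classical
  set Vb : Set (Fin d → ℝ) := {v : Fin d → ℝ | v ⬝ᵥ v ≤ 1} with hVb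
  obtain ⟨u₀, hu₀⟩ : U.Nonempty := by
    rcases Set.eq_empty_or_nonempty U with h | h
    · rw [h, convexHull_empty] at hU0; exact absurd hU0 (notMem_empty _)
    · exact h
  have hV0 : (0 : Fin d → ℝ) ∈ Vb := by
    have : (0 : Fin d → ℝ) ⬝ᵥ (0 : Fin d → ℝ) = 0 := zero_dotProduct _
    simp only [hVb, mem_setOf_eq, this]
    norm_num
  have hVbcomp : IsCompact Vb := by
    have hcontdot : Continuous fun v : Fin d → ℝ => v ⬝ᵥ v :=
      continuous_finset_sum _ fun i _ => (continuous_apply i).mul (continuous_apply i)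
    have hclosed : IsClosed Vb := isClosed_le hcontdot continuous_const
    have hsub : Vb ⊆ Set.pi Set.univ (fun _ : Fin d => Icc (-1:ℝ) 1) := by
      intro v hv i _
      have h1 : v i * v i ≤ v ⬝ᵥ v :=
        Finset.single_le_sum (f := fun j => v j * v j)
          (fun j _ => mul_self_nonneg _) (Finset.mem_univ i)
      have h2 : v i * v i ≤ 1 := le_trans h1 hv
      constructor
      · nlinarith
      · nlinarith
    exact IsCompact.of_isClosed_subset (isCompact_univ_pi fun _ => isCompact_Icc) hclosed hsub
  have hcontMul : Continuous fun p : (Fin n → ℝ) × (Fin d → ℝ) => vecMulVec p.1 p.2 := by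
    apply continuous_pi; intro i; apply continuous_pi; intro j
    show Continuous fun p : (Fin n → ℝ) × (Fin d → ℝ) => p.1 i * p.2 j
    exact ((continuous_apply i).comp continuous_fst).mul ((continuous_apply j).comp continuous_snd)
  have hcontPU : Continuous fun u : Fin n → ℝ => vecMulVec u u := by
    apply continuous_pi; intro i; apply continuous_pi; intro j
    show Continuous fun u : Fin n → ℝ => u i * u j
    exact (continuous_apply i).mul (continuous_apply j)
  set f2 : (Fin n → ℝ) × (Fin d → ℝ) → Matrix (Fin n) (Fin d) ℝ :=
    fun p => vecMulVec p.1 p.2 with hf2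
  set D := convexHull ℝ (insert 0 (f2 '' (U ×ˢ Vb))) with hD
  have hDcomp : IsCompact D := isCompact_convexHull' (((hU.prod hVbcomp).image hcontMul).insert 0)
  set K := convexHull ℝ (insert 0 (PU U)) with hK
  have hKcomp : IsCompact K := isCompact_convexHull' ((hU.image hcontPU).insert 0)
  have hcvx : cvx (PU U) = K := by rw [cvx]; exact hKcomp.isClosed.closure_eq
  have hcvxcomp : IsCompact (cvx (PU U)) := hcvx ▸ hKcomp
  set S1 := {t : ℝ≥0∞ | ∃ (r : ℕ) (lam : Fin r → ℝ) (u : Fin r → Fin n → ℝ)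
    (v : Fin r → Fin d → ℝ),
    (∀ m, 0 ≤ lam m) ∧ (∀ m, u m ∈ U) ∧ (∀ m, v m ∈ Vb) ∧
    X = ∑ m, lam m • vecMulVec (u m) (v m) ∧ t = ENNReal.ofReal (∑ m, lam m)} with hS1
  have hTheta : Theta U Vb X = sInf S1 := rfl
  set S2 := {t : ℝ≥0∞ | ∃ (r : ℕ) (U' : Matrix (Fin n) (Fin r) ℝ)
    (V' : Matrix (Fin d) (Fin r) ℝ), X = U' * V'ᵀ ∧
    t = ENNReal.ofReal ((V' * V'ᵀ).trace) / 2 + gaugeE (PU U) (U' * U'ᵀ) / 2} with hS2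
  set T1 := {r : ℝ≥0 | X ∈ (r : ℝ) • D} with hT1
  have hgauge : ∀ Y : Matrix (Fin n) (Fin n) ℝ,
      gaugeE (PU U) Y =
        sInf ((fun r : ℝ≥0 => (r : ℝ≥0∞)) '' {r : ℝ≥0 | Y ∈ (r : ℝ) • cvx (PU U)}) := by
    intro Y
    rw [sInf_image]
    rfl
  have hgaugeLe : ∀ {k : ℕ} (lam : Fin k → ℝ) (uu : Fin k → Fin n → ℝ),
      (∀ m, 0 ≤ lam m) → (∀ m, uu m ∈ U) →
      gaugeE (PU U) (∑ m, lam m • vecMulVec (uu m) (uu m)) ≤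
        ENNReal.ofReal (∑ m, lam m) := by
    intro k lam uu h0 hu
    have hs : 0 ≤ ∑ m, lam m := Finset.sum_nonneg fun m _ => h0 m
    have hmem : (∑ m, lam m • vecMulVec (uu m) (uu m)) ∈
        (((∑ m, lam m).toNNReal : ℝ≥0) : ℝ) • cvx (PU U) := by
      rw [Real.coe_toNNReal _ hs, cvx]
      exact smul_set_mono subset_closure
        (sum_smul_mem_smul_hull (s := U) (fun u => vecMulVec u u) lam h0 uu hu)
    calc gaugeE (PU U) (∑ m, lam m • vecMulVec (uu m) (uu m))
        ≤ (((∑ m, lam m).toNNReal : ℝ≥0) : ℝ≥0∞) :=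
          iInf_le_of_le (∑ m, lam m).toNNReal (iInf_le _ hmem)
      _ = ENNReal.ofReal (∑ m, lam m) := rfl
  have htrvv : ∀ {b : ℕ} (w : Fin b → ℝ), (vecMulVec w w).trace = w ⬝ᵥ w := by
    intro b w
    rfl
  have stepA : ∀ t ∈ S1, ∃ t' ∈ S2, t' ≤ t := by
    rintro t ⟨r, lam, u, v, hl0, hu, hv, hXeq, rfl⟩
    have hs : 0 ≤ ∑ m, lam m := Finset.sum_nonneg fun m _ => hl0 m
    set U' : Matrix (Fin n) (Fin r) ℝ :=
      Matrix.of fun i m => Real.sqrt (lam m) * u m i with hU'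
    set W' : Matrix (Fin d) (Fin r) ℝ :=
      Matrix.of fun j m => Real.sqrt (lam m) * v m j with hW'
    have hXf : X = U' * W'ᵀ := by
      rw [hU', hW', factor_mul_transpose lam hl0 u v]; exact hXeq
    have hUU : U' * U'ᵀ = ∑ m, lam m • vecMulVec (u m) (u m) :=
      factor_mul_transpose lam hl0 u u
    have hWW : W' * W'ᵀ = ∑ m, lam m • vecMulVec (v m) (v m) :=
      factor_mul_transpose lam hl0 v v
    have htr : (W' * W'ᵀ).trace ≤ ∑ m, lam m := by
      rw [hWW, Matrix.trace_sum]
      have h1 : ∀ m ∈ Finset.univ, (lam m • vecMulVec (v m) (v m)).trace ≤ lam m := by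
        intro m _
        rw [Matrix.trace_smul, htrvv (v m), smul_eq_mul]
        calc lam m * (v m ⬝ᵥ v m) ≤ lam m * 1 :=
              mul_le_mul_of_nonneg_left (hv m) (hl0 m)
          _ = lam m := mul_one _
      exact Finset.sum_le_sum h1
    have hg : gaugeE (PU U) (U' * U'ᵀ) ≤ ENNReal.ofReal (∑ m, lam m) := by
      rw [hUU]; exact hgaugeLe lam u hl0 hu
    refine ⟨_, ⟨r, U', W', hXf, rfl⟩, ?_⟩
    calc ENNReal.ofReal ((W' * W'ᵀ).trace) / 2 + gaugeE (PU U) (U' * U'ᵀ) / 2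
        ≤ ENNReal.ofReal (∑ m, lam m) / 2 + ENNReal.ofReal (∑ m, lam m) / 2 := by
          apply add_le_add
          · exact ENNReal.div_le_div_right (ENNReal.ofReal_le_ofReal htr) 2
          · exact ENNReal.div_le_div_right hg 2
      _ = ENNReal.ofReal (∑ m, lam m) := ENNReal.add_halves _
  have stepB : ∀ t ∈ S2, sInf S1 ≤ t := by
    rintro t ⟨r', U', V', hXf, rfl⟩
    rcases eq_or_ne (gaugeE (PU U) (U' * U'ᵀ)) ⊤ with hgt | hgt
    · rw [hgt]
      have h2 : (⊤ : ℝ≥0∞) / 2 = ⊤ := ENNReal.top_div_of_ne_top (by norm_num)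
      rw [h2, add_top]
      exact le_top
    · set T2 := {r : ℝ≥0 | U' * U'ᵀ ∈ (r : ℝ) • cvx (PU U)} with hT2
      have hgeq : gaugeE (PU U) (U' * U'ᵀ) = sInf ((fun r : ℝ≥0 => (r : ℝ≥0∞)) '' T2) :=
        hgauge _
      have hT2ne : T2.Nonempty := by
        by_contra hcon
        rw [Set.not_nonempty_iff_eq_empty] at hcon
        rw [hgeq, hcon, Set.image_empty, _root_.sInf_empty] at hgt
        exact hgt rfl
      have hγmem : sInf T2 ∈ T2 := sInf_mem_scaleSet hcvxcomp _ hT2ne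
      have hγeq : ((sInf T2 : ℝ≥0) : ℝ≥0∞) = gaugeE (PU U) (U' * U'ᵀ) := by
        rw [hgeq, sInf_image]
        exact ENNReal.coe_sInf hT2ne
      set γ : ℝ≥0 := sInf T2 with hγ
      have hmem : U' * U'ᵀ ∈ (γ : ℝ) • K := by rw [← hcvx]; exact hγmem
      obtain ⟨k, lam, uu, hl0, huu, hlsum, hrep⟩ :=
        smul_hull_rep (s := U) (fun u => vecMulVec u u) u₀ hu₀ γ.coe_nonneg
          (by rw [hK] at hmem; exact hmem)
      set A : Matrix (Fin n) (Fin k) ℝ :=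
        Matrix.of fun i m => Real.sqrt (lam m) * uu m i with hA
      have hAA : A * Aᵀ = U' * U'ᵀ := by
        rw [hA, factor_mul_transpose lam hl0 uu uu]; exact hrep.symm
      obtain ⟨Q, hAQ, hQc⟩ := gram_factor A U' hAA
      set W : Matrix (Fin k) (Fin d) ℝ := Q * V'ᵀ with hW
      have hXW : X = A * W := by rw [hXf, ← hAQ, Matrix.mul_assoc]
      set nm : Fin k → ℝ := fun m => Real.sqrt (W m ⬝ᵥ W m) with hnm
      have hnm0 : ∀ m, 0 ≤ nm m := fun m => Real.sqrt_nonneg _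
      have hWnn : ∀ m, 0 ≤ W m ⬝ᵥ W m :=
        fun m => Finset.sum_nonneg fun j _ => mul_self_nonneg _
      have hnmsq : ∀ m, nm m * nm m = W m ⬝ᵥ W m := fun m => Real.mul_self_sqrt (hWnn m)
      have hrow0 : ∀ m, nm m = 0 → W m = 0 := by
        intro m hm
        have h1 : W m ⬝ᵥ W m = 0 := by rw [← hnmsq m, hm, mul_zero]
        funext j
        have h2 := (Finset.sum_eq_zero_iff_of_nonneg
          (fun j _ => mul_self_nonneg (W m j))).mp h1 j (Finset.mem_univ j)
        exact mul_self_eq_zero.mp h2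
      set lam' : Fin k → ℝ := fun m => Real.sqrt (lam m) * nm m with hlam'
      set v' : Fin k → Fin d → ℝ :=
        fun m => if nm m = 0 then 0 else (nm m)⁻¹ • W m with hv'
      have hl'0 : ∀ m, 0 ≤ lam' m := fun m => mul_nonneg (Real.sqrt_nonneg _) (hnm0 m)
      have hv'mem : ∀ m, v' m ∈ Vb := by
        intro m
        by_cases h : nm m = 0
        · have : v' m = 0 := by rw [hv']; dsimp only; rw [if_pos h]
          rw [this]
          exact hV0
        · have hveq : v' m = (nm m)⁻¹ • W m := by rw [hv']; dsimp only; rw [if_neg h]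
          rw [hVb]
          show v' m ⬝ᵥ v' m ≤ 1
          rw [hveq, smul_dotProduct, dotProduct_smul, smul_eq_mul, smul_eq_mul,
            ← hnmsq m]
          rw [show (nm m)⁻¹ * ((nm m)⁻¹ * (nm m * nm m)) = 1 by field_simp]
      have hXdec : X = ∑ m, lam' m • vecMulVec (uu m) (v' m) := by
        rw [hXW]
        ext i j
        rw [Matrix.mul_apply, Matrix.sum_apply]
        apply Finset.sum_congr rfl
        intro m _
        rw [Matrix.smul_apply, Matrix.vecMulVec_apply, smul_eq_mul]
        by_cases h : nm m = 0
        · have hW0 : W m = 0 := hrow0 m h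
          have hWj : W m j = 0 := by rw [hW0]; rfl
          have hlm : lam' m = 0 := by rw [hlam']; dsimp only; rw [h, mul_zero]
          rw [hlm, zero_mul]
          show A i m * W m j = 0
          rw [hWj, mul_zero]
        · have hveq : v' m = (nm m)⁻¹ • W m := by rw [hv']; dsimp only; rw [if_neg h]
          have hlm : lam' m = Real.sqrt (lam m) * nm m := rfl
          show A i m * W m j = lam' m * (uu m i * v' m j)
          rw [hveq, hlm, hA]
          show Real.sqrt (lam m) * uu m i * W m j =
            Real.sqrt (lam m) * nm m * (uu m i * ((nm m)⁻¹ * W m j))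
          field_simp
      have htrV : (V' * V'ᵀ).trace = ∑ j, V' j ⬝ᵥ V' j := trace_mul_transpose_self V'
      have htrnn : 0 ≤ (V' * V'ᵀ).trace := by
        rw [htrV]
        exact Finset.sum_nonneg fun j _ =>
          Finset.sum_nonneg fun l _ => mul_self_nonneg _
      have hsum2 : ∑ m, W m ⬝ᵥ W m ≤ (V' * V'ᵀ).trace := by
        have hswap : ∑ m, W m ⬝ᵥ W m = ∑ j, (Q *ᵥ V' j) ⬝ᵥ (Q *ᵥ V' j) := by
          have hcol : ∀ j m, W m j = (Q *ᵥ V' j) m := by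
            intro j m
            rw [hW, Matrix.mul_apply, Matrix.mulVec]
            apply Finset.sum_congr rfl
            intro l _
            rw [Matrix.transpose_apply]
          calc ∑ m, W m ⬝ᵥ W m = ∑ m, ∑ j, W m j * W m j := rfl
            _ = ∑ j, ∑ m, W m j * W m j := Finset.sum_comm
            _ = ∑ j, (Q *ᵥ V' j) ⬝ᵥ (Q *ᵥ V' j) := by
                apply Finset.sum_congr rfl
                intro j _
                apply Finset.sum_congr rfl
                intro m _
                rw [hcol j m]
        rw [hswap, htrV]
        exact Finset.sum_le_sum fun j _ => hQc (V' j)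
      have hfinal : ∑ m, lam' m ≤ (V' * V'ᵀ).trace / 2 + (γ : ℝ) / 2 := by
        have hAM : ∀ m ∈ Finset.univ, lam' m ≤ (lam m + W m ⬝ᵥ W m) / 2 := by
          intro m _
          have hsq : Real.sqrt (lam m) * Real.sqrt (lam m) = lam m :=
            Real.mul_self_sqrt (hl0 m)
          have := sq_nonneg (Real.sqrt (lam m) - nm m)
          have hl : lam' m = Real.sqrt (lam m) * nm m := rfl
          nlinarith [hnmsq m]
        calc ∑ m, lam' m ≤ ∑ m, (lam m + W m ⬝ᵥ W m) / 2 := Finset.sum_le_sum hAM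
          _ = (∑ m, lam m) / 2 + (∑ m, W m ⬝ᵥ W m) / 2 := by
              rw [← Finset.sum_div, Finset.sum_add_distrib, add_div]
          _ ≤ (γ : ℝ) / 2 + (V' * V'ᵀ).trace / 2 := by
              apply add_le_add
              · exact by linarith
              · exact by linarith
          _ = (V' * V'ᵀ).trace / 2 + (γ : ℝ) / 2 := add_comm _ _
      have hmemS1 : ENNReal.ofReal (∑ m, lam' m) ∈ S1 :=
        ⟨k, lam', uu, v', hl'0, huu, hv'mem, hXdec, rfl⟩
      refine le_trans (sInf_le hmemS1) ?_
      calc ENNReal.ofReal (∑ m, lam' m)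
          ≤ ENNReal.ofReal ((V' * V'ᵀ).trace / 2 + (γ : ℝ) / 2) :=
            ENNReal.ofReal_le_ofReal hfinal
        _ = ENNReal.ofReal ((V' * V'ᵀ).trace / 2) + ENNReal.ofReal ((γ : ℝ) / 2) :=
            ENNReal.ofReal_add (by positivity) (by positivity)
        _ = ENNReal.ofReal ((V' * V'ᵀ).trace) / 2 + (γ : ℝ≥0∞) / 2 := by
            rw [ENNReal.ofReal_div_of_pos two_pos, ENNReal.ofReal_div_of_pos two_pos,
              ENNReal.ofReal_coe_nnreal, ENNReal.ofReal_ofNat]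
        _ = ENNReal.ofReal ((V' * V'ᵀ).trace) / 2 + gaugeE (PU U) (U' * U'ᵀ) / 2 := by
            rw [hγeq]
  have hS1T1 : S1 = (fun r : ℝ≥0 => (r : ℝ≥0∞)) '' T1 := by
    ext t
    constructor
    · rintro ⟨r, lam, u, v, hl0, hu, hv, hXeq, rfl⟩
      have hs : 0 ≤ ∑ m, lam m := Finset.sum_nonneg fun m _ => hl0 m
      refine ⟨(∑ m, lam m).toNNReal, ?_, rfl⟩
      show X ∈ (((∑ m, lam m).toNNReal : ℝ≥0) : ℝ) • D
      rw [Real.coe_toNNReal _ hs, hXeq]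
      exact sum_smul_mem_smul_hull (s := U ×ˢ Vb) f2 lam hl0
        (fun m => (u m, v m)) (fun m => Set.mem_prod.mpr ⟨hu m, hv m⟩)
    · rintro ⟨r, hr, rfl⟩
      have hf0 : f2 (u₀, 0) = 0 := by
        rw [hf2]
        ext i j
        show u₀ i * (0 : Fin d → ℝ) j = 0
        rw [Pi.zero_apply, mul_zero]
      obtain ⟨k, lam, z, hl0, hz, hsum, hXeq⟩ :=
        smul_hull_rep_exact (s := U ×ˢ Vb) f2 (u₀, 0)
          (Set.mem_prod.mpr ⟨hu₀, hV0⟩) hf0 r.coe_nonneg hr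
      refine ⟨k, lam, fun m => (z m).1, fun m => (z m).2, hl0,
        fun m => (Set.mem_prod.mp (hz m)).1, fun m => (Set.mem_prod.mp (hz m)).2, hXeq, ?_⟩
      rw [hsum]
      exact ENNReal.ofReal_coe_nnreal.symm
  have hEq : sInf S1 = sInf S2 := by
    apply le_antisymm
    · exact le_sInf stepB
    · apply le_sInf
      intro t ht
      obtain ⟨t', ht', hle⟩ := stepA t ht
      exact le_trans (sInf_le ht') hle
  refine ⟨hEq, ?_⟩
  rcases eq_or_ne (sInf S1) ⊤ with htop | htop
  · have hmem : (ENNReal.ofReal ((1 * (1:Matrix (Fin d) (Fin d) ℝ)ᵀ).trace) / 2 +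
        gaugeE (PU U) (X * Xᵀ) / 2) ∈ S2 := by
      exact ⟨d, X, 1, by rw [Matrix.transpose_one, Matrix.mul_one], by rw [Matrix.one_mul]⟩
    have hletop := stepB _ hmem
    rw [htop] at hletop
    have hval := top_le_iff.mp hletop
    refine ⟨d, X, 1, by rw [Matrix.transpose_one, Matrix.mul_one], ?_⟩
    rw [hTheta, htop]
    exact hval.symm
  · have hS1ne : S1.Nonempty := by
      by_contra hcon
      rw [Set.not_nonempty_iff_eq_empty] at hcon
      rw [hcon, _root_.sInf_empty] at htop
      exact htop rfl
    have hT1ne : T1.Nonempty := by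
      obtain ⟨t, ht⟩ := hS1ne
      rw [hS1T1] at ht
      obtain ⟨rr, hrr, _⟩ := ht
      exact ⟨rr, hrr⟩
    have hopt_eq : ((sInf T1 : ℝ≥0) : ℝ≥0∞) = sInf S1 := by
      rw [hS1T1, sInf_image]
      exact ENNReal.coe_sInf hT1ne
    have hoptmem : ((sInf T1 : ℝ≥0) : ℝ≥0∞) ∈ S1 := by
      rw [hS1T1]
      exact ⟨sInf T1, sInf_mem_scaleSet hDcomp _ hT1ne, rfl⟩
    obtain ⟨t', ht', hle⟩ := stepA _ hoptmem
    have hge : sInf S1 ≤ t' := stepB t' ht'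
    have ht'eq : t' = sInf S1 := le_antisymm (hopt_eq ▸ hle) hge
    obtain ⟨rr, U', V', hfact, heq⟩ := ht'
    exact ⟨rr, U', V', hfact, by rw [hTheta, ← ht'eq, heq]⟩

end
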